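/- The ordered weighted ℓ1 function Ω_w(β) = Σ_{i=1}^N w_i |β|_{[i]}, where |β|_{[i]} denotes the i-th largest entry of β in absolute value and w_1 ≥ w_2 ≥ ... ≥ w_N ≥ 0 with w_1 > 0, is a norm on ℝ^N. -/

import Mathlib

noncomputable def owlSorted {N : ℕ} (β : Fin N → ℝ) : Fin N → ℝ :=
  fun i => |β (Tuple.sort (fun j => |β j|) i.rev)|

noncomputable def owl {N : ℕ} (w β : Fin N → ℝ) : ℝ :=
  ∑ i, w i * owlSorted β i

noncomputable def owlDual {M : ℕ} (v z : Fin M → ℝ) : ℝ :=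
  ⨆ i : Fin M, (∑ j ∈ Finset.univ.filter (fun j => j ≤ i), v j)⁻¹ *
    ∑ j ∈ Finset.univ.filter (fun j => j ≤ i), owlSorted z j

lemma owlSorted_antitone {N : ℕ} (β : Fin N → ℝ) : Antitone (owlSorted β) := by
  intro i j hij
  exact Tuple.monotone_sort (fun k => |β k|) (Fin.rev_le_rev.mpr hij)

lemma abs_eq_owlSorted {N : ℕ} (β : Fin N → ℝ) (k : Fin N) :
    |β k| = owlSorted β (((Tuple.sort (fun j => |β j|))⁻¹ k).rev) := by
  simp [owlSorted, Fin.rev_rev]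

lemma monovary_owl {N : ℕ} (w β : Fin N → ℝ) (hmono : Antitone w) :
    Monovary w (owlSorted β) := by
  intro i j h
  rcases le_or_gt j i with hji | hij
  · exact hmono hji
  · exact absurd (owlSorted_antitone β hij.le) (not_le.mpr h)

lemma rearr {N : ℕ} (w β : Fin N → ℝ) (hmono : Antitone w) (σ : Equiv.Perm (Fin N)) :
    ∑ i, w i * |β (σ i)| ≤ owl w β := by
  set τ : Equiv.Perm (Fin N) :=
    σ.trans (((Tuple.sort (fun j => |β j|))⁻¹).trans Fin.revPerm) with hτ
  have hβ : ∀ i, |β (σ i)| = owlSorted β (τ i) := fun i => abs_eq_owlSorted β (σ i)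
  calc ∑ i, w i * |β (σ i)| = ∑ i, w i • owlSorted β (τ i) := by
        simp [hβ, smul_eq_mul]
    _ ≤ ∑ i, w i • owlSorted β i :=
        (monovary_owl w β hmono).sum_smul_comp_perm_le_sum_smul (σ := τ)
    _ = owl w β := by simp [owl, smul_eq_mul]

lemma owl_eq_perm {N : ℕ} (w β : Fin N → ℝ) :
    owl w β = ∑ i, w i * |β ((Tuple.sort (fun j => |β j|)) i.rev)| := by
  simp [owl, owlSorted]

lemma owl_nonneg_terms {N : ℕ} (w β : Fin N → ℝ) (hnonneg : ∀ i, 0 ≤ w i) :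
    ∀ i, 0 ≤ w i * owlSorted β i := fun i =>
  mul_nonneg (hnonneg i) (abs_nonneg _)

theorem stmt_0 {N : ℕ} (w : Fin (N + 1) → ℝ)
    (hmono : Antitone w) (hnonneg : ∀ i, 0 ≤ w i) (hpos : 0 < w 0) :
    (∀ β : Fin (N + 1) → ℝ, owl w β = 0 ↔ β = 0) ∧
    (∀ (c : ℝ) (β : Fin (N + 1) → ℝ), owl w (c • β) = |c| * owl w β) ∧
    (∀ x y : Fin (N + 1) → ℝ, owl w (x + y) ≤ owl w x + owl w y) := by
  have hhom : ∀ (c : ℝ) (β : Fin (N + 1) → ℝ), owl w (c • β) = |c| * owl w β := by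
    have key : ∀ (c : ℝ) (β : Fin (N + 1) → ℝ), owl w (c • β) ≤ |c| * owl w β := by
      intro c β
      rw [owl_eq_perm w (c • β)]
      set σ : Equiv.Perm (Fin (N + 1)) :=
        Fin.revPerm.trans (Tuple.sort (fun j => |(c • β) j|))
      have : ∑ i, w i * |(c • β) (σ i)| = |c| * ∑ i, w i * |β (σ i)| := by
        rw [Finset.mul_sum]
        refine Finset.sum_congr rfl fun i _ => ?_
        simp [abs_mul]; ring
      calc ∑ i, w i * |(c • β) (σ i)| = |c| * ∑ i, w i * |β (σ i)| := this
        _ ≤ |c| * owl w β :=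
          mul_le_mul_of_nonneg_left (rearr w β hmono σ) (abs_nonneg c)
    intro c β
    rcases eq_or_ne c 0 with rfl | hc
    · simp only [zero_smul, abs_zero, zero_mul]
      have : owlSorted (0 : Fin (N + 1) → ℝ) = 0 := by
        funext i; simp [owlSorted]
      simp [owl, this]
    · refine le_antisymm (key c β) ?_
      have h2 := key c⁻¹ (c • β)
      rw [smul_smul, inv_mul_cancel₀ hc, one_smul] at h2
      have := mul_le_mul_of_nonneg_left h2 (abs_nonneg c)
      rwa [← mul_assoc, ← abs_mul, mul_inv_cancel₀ hc, abs_one, one_mul] at this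
  refine ⟨?_, hhom, ?_⟩
  · intro β
    constructor
    · intro h
      have hterm : ∀ i ∈ Finset.univ, w i * owlSorted β i = 0 :=
        (Finset.sum_eq_zero_iff_of_nonneg
          (fun i _ => owl_nonneg_terms w β hnonneg i)).mp h
      have h0 : owlSorted β 0 = 0 := by
        have := hterm 0 (Finset.mem_univ 0)
        exact (mul_eq_zero.mp this).resolve_left (ne_of_gt hpos)
      funext k
      have hk : |β k| ≤ owlSorted β 0 := by
        rw [abs_eq_owlSorted β k]
        exact owlSorted_antitone β (Fin.zero_le _)
      have := le_antisymm (h0 ▸ hk) (abs_nonneg _)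
      simpa using abs_eq_zero.mp this
    · rintro rfl
      have : owlSorted (0 : Fin (N + 1) → ℝ) = 0 := by
        funext i; simp [owlSorted]
      simp [owl, this]
  · intro x y
    rw [owl_eq_perm w (x + y)]
    set σ : Equiv.Perm (Fin (N + 1)) :=
      Fin.revPerm.trans (Tuple.sort (fun j => |(x + y) j|))
    calc ∑ i, w i * |(x + y) (σ i)|
        ≤ ∑ i, (w i * |x (σ i)| + w i * |y (σ i)|) := by
          refine Finset.sum_le_sum fun i _ => ?_
          rw [← mul_add]
          exact mul_le_mul_of_nonneg_left (by simpa using abs_add_le (x (σ i)) (y (σ i)))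
            (hnonneg i)
      _ = (∑ i, w i * |x (σ i)|) + ∑ i, w i * |y (σ i)| := Finset.sum_add_distrib
      _ ≤ owl w x + owl w y := add_le_add (rearr w x hmono σ) (rearr w y hmono σ)
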